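/- Let e(ζ) = Σ_{i≥0} α_i ζ^{q^i} be an entire 𝔽_q-linear series and let ω ∈ C. Then for every t₀ ∈ C with |t₀| < q, the two series Σ_{i≥0} e(ω/θ^{i+1}) t₀^i and Σ_{j≥0} α_j ω^{q^j}/(θ^{q^j} − t₀) both converge and have the same sum. -/

import Mathlib

set_option maxHeartbeats 1000000 in
/-- For an entire `𝔽_q`-linear series `E(ζ) = ∑ α_j ζ^{q^j}` and any `ω ∈ C`, for every
`t₀` with `|t₀| < q` the two series `∑_i E(ω/θ^{i+1}) t₀^i` and
`∑_j α_j ω^{q^j}/(θ^{q^j} - t₀)` both converge and have the same sum. -/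
theorem anderson_generating_function_partial_fractions
    {C : Type*} [NormedField C] [CompleteSpace C] [IsAlgClosed C] [IsUltrametricDist C]
    (p e : ℕ) (hp : p.Prime) (he : 0 < e) [CharP C p]
    (q : ℕ) (hq : q = p ^ e)
    (θ : C) (hθ : ‖θ‖ = (q : ℝ))
    (α : ℕ → C) (hα0 : α 0 = 1)
    (hdecay : ∀ r : ℝ, 0 < r →
      Filter.Tendsto (fun i : ℕ => ‖α i‖ * r ^ (q ^ i)) Filter.atTop (nhds 0))
    (E : C → C) (hE : ∀ ζ : C, E ζ = ∑' i : ℕ, α i * ζ ^ q ^ i)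
    (ω : C) (t₀ : C) (ht₀ : ‖t₀‖ < (q : ℝ)) :
    Summable (fun i : ℕ => E (ω / θ ^ (i + 1)) * t₀ ^ i) ∧
    Summable (fun j : ℕ => α j * ω ^ q ^ j / (θ ^ q ^ j - t₀)) ∧
    ∑' i : ℕ, E (ω / θ ^ (i + 1)) * t₀ ^ i
      = ∑' j : ℕ, α j * ω ^ q ^ j / (θ ^ q ^ j - t₀) := by
  -- basic facts about q
  have hq2 : 2 ≤ q := by
    have : 1 < q := by rw [hq]; exact Nat.one_lt_pow he.ne' hp.one_lt
    omega
  have hQ1 : (1 : ℝ) < (q : ℝ) := by exact_mod_cast (by omega : 1 < q)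
  have hQ0 : (0 : ℝ) < (q : ℝ) := lt_trans one_pos hQ1
  have hθ0 : θ ≠ 0 := by
    intro h
    rw [h, norm_zero] at hθ
    exact hQ0.ne hθ
  set Q : ℝ := (q : ℝ) with hQdef
  -- norms of powers of θ
  have hdnorm : ∀ j : ℕ, ‖θ ^ q ^ j‖ = Q ^ q ^ j := fun j => by rw [norm_pow, hθ]
  have hQle : ∀ j : ℕ, Q ≤ Q ^ q ^ j := fun j =>
    le_self_pow₀ hQ1.le (pow_pos (by omega : 0 < q) j).ne'
  have hd0 : ∀ j : ℕ, θ ^ q ^ j ≠ 0 := fun j => pow_ne_zero _ hθ0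
  have ht₀d : ∀ j : ℕ, ‖t₀‖ < ‖θ ^ q ^ j‖ := fun j => by
    rw [hdnorm]; exact lt_of_lt_of_le ht₀ (hQle j)
  have hx : ∀ j : ℕ, ‖t₀ / θ ^ q ^ j‖ < 1 := fun j => by
    rw [norm_div, div_lt_one (lt_of_le_of_lt (norm_nonneg _) (ht₀d j))]
    exact ht₀d j
  have hsub : ∀ j : ℕ, θ ^ q ^ j - t₀ ≠ 0 := fun j => sub_ne_zero.mpr
    (fun h => absurd (congrArg norm h) (ht₀d j).ne')
  -- the double-indexed family
  set f : ℕ × ℕ → C := fun ij => α ij.2 * ω ^ q ^ ij.2 / θ ^ q ^ ij.2 * (t₀ / θ ^ q ^ ij.2) ^ ij.1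
    with hfdef
  -- summability of f via a norm bound
  set s : ℝ := 2 * (‖ω‖ + 1) / Q with hsdef
  have hs0 : 0 < s := by positivity
  obtain ⟨M, hM⟩ : ∃ M : ℝ, ∀ j : ℕ, ‖α j‖ * s ^ q ^ j ≤ M := by
    obtain ⟨M, hM⟩ := (hdecay s hs0).bddAbove_range
    exact ⟨M, fun j => hM ⟨j, rfl⟩⟩
  have hM0 : 0 ≤ M := le_trans (by positivity) (hM 0)
  set b : ℝ := ‖t₀‖ / Q with hbdef
  have hb0 : 0 ≤ b := by positivity
  have hb1 : b < 1 := (div_lt_one hQ0).mpr ht₀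
  have hbound : ∀ ij : ℕ × ℕ, ‖f ij‖ ≤ b ^ ij.1 * (M * (1/2 : ℝ) ^ ij.2) := by
    rintro ⟨i, j⟩
    have h1 : ‖f (i, j)‖ = ‖α j‖ * ‖ω‖ ^ q ^ j / Q ^ q ^ j * (‖t₀‖ / Q ^ q ^ j) ^ i := by
      simp [hfdef, norm_mul, norm_div, norm_pow, hθ]
    rw [h1]
    have hst : (‖ω‖ + 1) / Q = s * (1/2) := by
      rw [hsdef]; ring
    have hA : ‖α j‖ * ‖ω‖ ^ q ^ j / Q ^ q ^ j ≤ ‖α j‖ * (‖ω‖ + 1) ^ q ^ j / Q ^ q ^ j := by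
      gcongr <;> first | positivity | linarith [norm_nonneg ω]
    have hB : (‖t₀‖ / Q ^ q ^ j) ^ i ≤ b ^ i := by
      apply pow_le_pow_left₀ (by positivity)
      rw [hbdef]
      gcongr <;> first | exact norm_nonneg _ | exact hQ0 | exact hQle j | positivity
    have step1 : ‖α j‖ * ‖ω‖ ^ q ^ j / Q ^ q ^ j * (‖t₀‖ / Q ^ q ^ j) ^ i
        ≤ ‖α j‖ * (‖ω‖ + 1) ^ q ^ j / Q ^ q ^ j * b ^ i :=
      mul_le_mul hA hB (by positivity) (by positivity)
    have step2 : ‖α j‖ * (‖ω‖ + 1) ^ q ^ j / Q ^ q ^ j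
        = ‖α j‖ * s ^ q ^ j * (1/2 : ℝ) ^ q ^ j := by
      rw [mul_div_assoc, ← div_pow, hst, mul_pow, ← mul_assoc]
    have hjq : j ≤ q ^ j := le_of_lt (Nat.lt_pow_self (n := j) (by omega : 1 < q))
    have step3 : ‖α j‖ * s ^ q ^ j * (1/2 : ℝ) ^ q ^ j ≤ M * (1/2 : ℝ) ^ j :=
      mul_le_mul (hM j) (pow_le_pow_of_le_one (by norm_num) (by norm_num) hjq)
        (by positivity) hM0
    calc ‖α j‖ * ‖ω‖ ^ q ^ j / Q ^ q ^ j * (‖t₀‖ / Q ^ q ^ j) ^ i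
        ≤ ‖α j‖ * (‖ω‖ + 1) ^ q ^ j / Q ^ q ^ j * b ^ i := step1
      _ = ‖α j‖ * s ^ q ^ j * (1/2 : ℝ) ^ q ^ j * b ^ i := by rw [step2]
      _ ≤ M * (1/2 : ℝ) ^ j * b ^ i :=
          mul_le_mul_of_nonneg_right step3 (pow_nonneg hb0 i)
      _ = b ^ i * (M * (1/2 : ℝ) ^ j) := by ring
  have hmaj : Summable (fun ij : ℕ × ℕ => b ^ ij.1 * (M * (1/2 : ℝ) ^ ij.2)) :=
    Summable.mul_of_nonneg (summable_geometric_of_lt_one hb0 hb1)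
      ((summable_geometric_of_lt_one (by norm_num) (by norm_num)).mul_left M)
      (fun i => pow_nonneg hb0 i) (fun j => by positivity)
  have hf : Summable f := Summable.of_norm_bounded hmaj hbound
  -- column sums (geometric series in i)
  have hGeo : ∀ j : ℕ, HasSum (fun i : ℕ => f (i, j))
      (α j * ω ^ q ^ j / (θ ^ q ^ j - t₀)) := by
    intro j
    have h := (hasSum_geometric_of_norm_lt_one (hx j)).mul_left (α j * ω ^ q ^ j / θ ^ q ^ j)
    convert h using 1
    rw [eq_comm]
    · rfl
    rw [one_sub_div (hd0 j)]
    field_simp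
  -- row sums (the entire function values)
  have hRow : ∀ i : ℕ, HasSum (fun j : ℕ => f (i, j)) (E (ω / θ ^ (i + 1)) * t₀ ^ i) := by
    intro i
    have heq : (fun j : ℕ => f (i, j))
        = fun j : ℕ => α j * (ω / θ ^ (i + 1)) ^ q ^ j * t₀ ^ i := by
      funext j
      simp only [hfdef]
      rw [div_pow, div_pow, ← pow_mul, ← pow_mul]
      rw [mul_comm (q ^ j) i, add_mul, one_mul, pow_add]
      field_simp
    have hs := hf.prod_factor i
    rw [heq] at hs ⊢
    have := hs.hasSum
    rwa [tsum_mul_right, ← hE] at this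
  -- assemble
  have hS1 : HasSum (fun i : ℕ => E (ω / θ ^ (i + 1)) * t₀ ^ i) (∑' ij : ℕ × ℕ, f ij) :=
    hf.hasSum.prod_fiberwise hRow
  have hswap : Summable (fun ij : ℕ × ℕ => f (ij.2, ij.1)) :=
    (Equiv.prodComm ℕ ℕ).summable_iff.mpr hf
  have hS2 : HasSum (fun j : ℕ => α j * ω ^ q ^ j / (θ ^ q ^ j - t₀))
      (∑' ij : ℕ × ℕ, f (ij.2, ij.1)) :=
    hswap.hasSum.prod_fiberwise (fun j => hGeo j)
  have htsum : (∑' ij : ℕ × ℕ, f (ij.2, ij.1)) = ∑' ij : ℕ × ℕ, f ij :=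
    (Equiv.prodComm ℕ ℕ).tsum_eq f
  exact ⟨hS1.summable, hS2.summable, by rw [hS1.tsum_eq, hS2.tsum_eq, htsum]⟩
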